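/- Let τ ∈ ℝ, let ε ∈ {1, −1}, and let f(ξ) = ε/2 + τ/(2·ξ). Then the cubic function I₃(J₊, J₋, J₃) = (J₊ + J₋ − 2·ε·J₃)·(τ² − 2·τ·J₃ + J₊·J₋) is invariant under the sl₂ evolution map Φ_f: for every (J₊, J₋, J₃) ∈ ℝ³ with J₋ ≠ 0, one has I₃(Φ_f(J₊, J₋, J₃)) = I₃(J₊, J₋, J₃). -/
import Mathlib


/-- The sl₂ evolution map associated to a function `f : ℝ → ℝ`. -/
noncomputable def Phi (f : ℝ → ℝ) : ℝ × ℝ × ℝ → ℝ × ℝ × ℝ :=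
  fun J => (J.2.1,
            J.1 - 4 * J.2.2 * f J.2.1 + 4 * J.2.1 * (f J.2.1) ^ 2,
            -J.2.2 + 2 * J.2.1 * f J.2.1)

theorem I3_invariant (τ ε : ℝ) (hε : ε = 1 ∨ ε = -1) (Jp Jm J3 : ℝ)
    (hJm : Jm ≠ 0) :
    ((Phi (fun ξ => ε / 2 + τ / (2 * ξ)) (Jp, Jm, J3)).1
        + (Phi (fun ξ => ε / 2 + τ / (2 * ξ)) (Jp, Jm, J3)).2.1
        - 2 * ε * (Phi (fun ξ => ε / 2 + τ / (2 * ξ)) (Jp, Jm, J3)).2.2)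
      * (τ ^ 2 - 2 * τ * (Phi (fun ξ => ε / 2 + τ / (2 * ξ)) (Jp, Jm, J3)).2.2
          + (Phi (fun ξ => ε / 2 + τ / (2 * ξ)) (Jp, Jm, J3)).1
            * (Phi (fun ξ => ε / 2 + τ / (2 * ξ)) (Jp, Jm, J3)).2.1)
      = (Jp + Jm - 2 * ε * J3) * (τ ^ 2 - 2 * τ * J3 + Jp * Jm) := by
  rcases hε with h | h <;> subst h <;> simp only [Phi] <;> field_simp <;> ring
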